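/- arXiv:1905.05033 — 2 statements merged into one kernel-verified Lean document; each statement's English description precedes it below -/
import Mathlib

section
/- Let n ≥ 1 and let S ⊆ {0,1,…,n}. If there exists an index i with 0 ≤ i < n such that neither i nor i+1 belongs to S, then S does not resolve the digraph G(*n); in particular, i and i+1 have identical vectors of signed distances from the vertices of S. -/
/-- `StepsTo R m u v` : there is a directed walk of length `m` from `u` to `v`. -/
def StepsTo {V : Type*} (R : V → V → Prop) : ℕ → V → V → Prop
  | 0 => fun u v => u = v
  | (m + 1) => fun u v => ∃ w, R u w ∧ StepsTo R m w v

/-- Directed distance: length of a shortest directed path (`⊤` = ∞ if none exists). -/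
noncomputable def ddist {V : Type*} (R : V → V → Prop) (u v : V) : ℕ∞ :=
  sInf ((fun m : ℕ => (m : ℕ∞)) '' {m : ℕ | StepsTo R m u v})

/-- Signed distance `d±(u,v)`: `d(u,v)` if a `u→v` path exists and `d(u,v) ≤ d(v,u)`;
`-d(v,u)` if a `v→u` path exists and `d(v,u) < d(u,v)`; `⊤` if neither path exists. -/
noncomputable def sdist {V : Type*} (R : V → V → Prop) (u v : V) : WithTop ℤ :=
  if ddist R u v ≤ ddist R v u then (ddist R u v).map (fun m : ℕ => (m : ℤ))
  else (ddist R v u).map (fun m : ℕ => (-(m : ℤ)))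

/-- `S` resolves the digraph with arc relation `R` (w.r.t. signed distance). -/
def Resolves {V : Type*} (R : V → V → Prop) (S : Set V) : Prop :=
  ∀ u v : V, (∀ s ∈ S, sdist R s u = sdist R s v) → u = v

/-- Metric dimension of the digraph with arc relation `R` (w.r.t. signed distance). -/
noncomputable def metricDim {V : Type*} (R : V → V → Prop) : ℕ :=
  sInf {k : ℕ | ∃ S : Finset V, S.card = k ∧ Resolves R ↑S}

/-- The digraph `G(*n)` of single-heap nim: vertices `{0,…,n}`, arc `i → j` iff `j < i`. -/
def nimR (n : ℕ) : Fin (n + 1) → Fin (n + 1) → Prop := fun i j => (j : ℕ) < (i : ℕ)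
lemma stepsTo_le (n : ℕ) : ∀ (m : ℕ) (u v : Fin (n+1)), StepsTo (nimR n) m u v → (v:ℕ) ≤ u := by
  intro m
  induction m with
  | zero => intro u v h; cases h; exact le_refl _
  | succ k ih =>
    rintro u v ⟨w, hw, hs⟩
    exact le_trans (ih w v hs) (le_of_lt hw)

lemma ddist_eq_top (n : ℕ) (u v : Fin (n+1)) (h : (u:ℕ) < v) : ddist (nimR n) u v = ⊤ := by
  unfold ddist
  rw [show ((fun m : ℕ => (m : ℕ∞)) '' {m : ℕ | StepsTo (nimR n) m u v}) = ∅ from ?_, sInf_empty]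
  ext x
  simp only [Set.mem_image, Set.mem_setOf_eq, Set.mem_empty_iff_false, iff_false]
  rintro ⟨m, hm, rfl⟩
  exact absurd (stepsTo_le n m u v hm) (by omega)

lemma ddist_eq_one (n : ℕ) (u v : Fin (n+1)) (h : (v:ℕ) < u) : ddist (nimR n) u v = 1 := by
  unfold ddist
  apply le_antisymm
  · exact sInf_le ⟨1, ⟨v, h, rfl⟩, rfl⟩
  · apply le_sInf
    rintro x ⟨m, hm, rfl⟩
    match m with
    | 0 => cases hm; omega
    | k+1 => simp only []; exact_mod_cast Nat.one_le_iff_ne_zero.mpr (Nat.succ_ne_zero k)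

lemma sdist_lt (n : ℕ) (s u : Fin (n+1)) (h : (u:ℕ) < s) : sdist (nimR n) s u = (1 : ℤ) := by
  unfold sdist
  rw [ddist_eq_one n s u h, ddist_eq_top n u s h, if_pos le_top]
  rfl

lemma sdist_gt (n : ℕ) (s u : Fin (n+1)) (h : (s:ℕ) < u) : sdist (nimR n) s u = (-1 : ℤ) := by
  unfold sdist
  rw [ddist_eq_one n u s h, ddist_eq_top n s u h, if_neg (by simp)]
  rfl

/-- if `0 ≤ i < n` and neither `i` nor `i+1` lies in `S ⊆ {0,…,n}`, then
`i` and `i+1` have identical signed-distance vectors from `S`, and `S` does not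
resolve `G(*n)`. -/
theorem stmt1 (n : ℕ) (hn : 1 ≤ n) (S : Set (Fin (n + 1))) (i : ℕ) (hi : i < n)
    (h1 : (⟨i, by omega⟩ : Fin (n + 1)) ∉ S)
    (h2 : (⟨i + 1, by omega⟩ : Fin (n + 1)) ∉ S) :
    (∀ s ∈ S, sdist (nimR n) s ⟨i, by omega⟩ = sdist (nimR n) s ⟨i + 1, by omega⟩) ∧
    ¬ Resolves (nimR n) S := by
  have key : ∀ s ∈ S, sdist (nimR n) s ⟨i, by omega⟩ = sdist (nimR n) s ⟨i+1, by omega⟩ := by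
    intro s hs
    have hne1 : (s:ℕ) ≠ i := fun h => h1 (by convert hs using 2; omega)
    have hne2 : (s:ℕ) ≠ i+1 := fun h => h2 (by convert hs using 2; omega)
    rcases lt_or_gt_of_ne hne1 with h | h
    · rw [sdist_gt n s _ h, sdist_gt n s _ (by simp; omega)]
    · rw [sdist_lt n s _ h, sdist_lt n s _ (by simp; omega)]
  refine ⟨key, fun hres => ?_⟩
  have := hres ⟨i, by omega⟩ ⟨i+1, by omega⟩ key
  simp [Fin.ext_iff] at this
end

section
/- For every integer n ≥ 1, the set S = {{k,k} : 1 ≤ k ≤ n, k odd} of diagonal positions with odd heap size, which has cardinality ⌈n/2⌉, resolves the two-heap nim digraph G(n,n) with respect to signed distance. -/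
/-- A nim move on a multiset of heaps: strictly decrease exactly one entry. -/
def NimMove (s t : Multiset ℕ) : Prop :=
  ∃ a ∈ s, ∃ b : ℕ, b < a ∧ t = b ::ₘ s.erase a

/-- Vertices of `G(n,n)`: multisets `{x,y}` with `0 ≤ x ≤ y ≤ n`. -/
def NimV (n : ℕ) : Type := {s : Multiset ℕ // Multiset.card s = 2 ∧ ∀ x ∈ s, x ≤ n}

/-- The arc relation of the two-heap nim digraph `G(n,n)`. -/
def nim2R (n : ℕ) (u v : NimV n) : Prop := NimMove u.1 v.1

section aux
variable {V : Type*} {R : V → V → Prop}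

lemma ddist_le {u v : V} {m : ℕ} (h : StepsTo R m u v) : ddist R u v ≤ m :=
  sInf_le ⟨m, h, rfl⟩

lemma le_ddist {u v : V} {m : ℕ} (h : ∀ m' : ℕ, m' < m → ¬ StepsTo R m' u v) :
    (m : ℕ∞) ≤ ddist R u v := by
  refine le_sInf ?_
  rintro x ⟨m', hm', rfl⟩
  exact Nat.cast_le.mpr (not_lt.mp (fun hlt => h m' hlt hm'))

lemma ddist_top {u v : V} (h : ∀ m : ℕ, ¬ StepsTo R m u v) : ddist R u v = ⊤ := by
  have he : {m : ℕ | StepsTo R m u v} = ∅ := by ext m; simp [h m]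
  simp [ddist, he]

lemma ddist_self (u : V) : ddist R u u = 0 :=
  le_antisymm (by simpa using ddist_le (show StepsTo R 0 u u from rfl)) zero_le

lemma ddist_eq_one_s5 {u v : V} (h1 : StepsTo R 1 u v) (h0 : u ≠ v) : ddist R u v = 1 := by
  refine le_antisymm (by simpa using ddist_le h1) ?_
  refine le_ddist fun m' hm' => ?_
  interval_cases m'
  exact fun h => h0 h

lemma ddist_eq_two {u v : V} (h2 : StepsTo R 2 u v) (h1 : ¬ StepsTo R 1 u v)
    (h0 : u ≠ v) : ddist R u v = 2 := by
  refine le_antisymm (by simpa using ddist_le h2) ?_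
  refine le_ddist fun m' hm' => ?_
  interval_cases m'
  · exact fun h => h0 h
  · exact h1

end aux

lemma mem_pair_iff {a x y : ℕ} : a ∈ ({x, y} : Multiset ℕ) ↔ a = x ∨ a = y := by
  simp [Multiset.insert_eq_cons]

lemma erase_pair_left (x y : ℕ) : ({x, y} : Multiset ℕ).erase x = {y} := by
  simp [Multiset.insert_eq_cons]

lemma pair_comm' (x y : ℕ) : ({x, y} : Multiset ℕ) = {y, x} := by
  simp only [Multiset.insert_eq_cons]
  exact Multiset.cons_swap x y {}

lemma nimMove_left {x y b : ℕ} (h : b < x) : NimMove {x, y} {b, y} :=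
  ⟨x, by simp [mem_pair_iff], b, h, by
    rw [erase_pair_left]; simp [Multiset.insert_eq_cons]⟩

lemma nimMove_right {x y b : ℕ} (h : b < y) : NimMove {x, y} {x, b} := by
  rw [pair_comm' x y, pair_comm' x b]; exact nimMove_left h

lemma nimMove_le {K : ℕ} {s t : Multiset ℕ} (h : NimMove s t) (hs : ∀ a ∈ s, a ≤ K) :
    ∀ a ∈ t, a ≤ K := by
  obtain ⟨a, ha, b, hb, rfl⟩ := h
  intro c hc
  rcases Multiset.mem_cons.mp hc with rfl | hc
  · exact le_of_lt (lt_of_lt_of_le hb (hs a ha))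
  · exact hs c (Multiset.mem_of_mem_erase hc)

lemma nimMove_ge {c : ℕ} {s t : Multiset ℕ} (h : NimMove s t) (ht : ∀ a ∈ t, c ≤ a) :
    ∀ a ∈ s, c ≤ a := by
  obtain ⟨a, ha, b, hb, rfl⟩ := h
  intro e he
  rcases eq_or_ne e a with rfl | hea
  · exact le_of_lt (lt_of_le_of_lt (ht b (Multiset.mem_cons_self _ _)) hb)
  · exact ht e (Multiset.mem_cons_of_mem (Multiset.mem_erase_of_ne hea |>.mpr he))

lemma nimMove_common {s t : Multiset ℕ} (hcard : Multiset.card s = 2) (h : NimMove s t) :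
    ∃ c, c ∈ s ∧ c ∈ t := by
  obtain ⟨a, ha, b, hb, rfl⟩ := h
  have hc1 : Multiset.card (s.erase a) = 1 := by
    simp [Multiset.card_erase_of_mem ha, hcard]
  obtain ⟨c, hc⟩ := Multiset.card_eq_one.mp hc1
  refine ⟨c, ?_, ?_⟩
  · exact Multiset.mem_of_mem_erase (by rw [hc]; exact Multiset.mem_singleton_self c)
  · exact Multiset.mem_cons_of_mem (by rw [hc]; exact Multiset.mem_singleton_self c)

lemma stepsTo_le_s5 {n K : ℕ} {u v : NimV n} {m : ℕ} (h : StepsTo (nim2R n) m u v)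
    (hs : ∀ a ∈ u.1, a ≤ K) : ∀ a ∈ v.1, a ≤ K := by
  induction m generalizing u with
  | zero => cases h; exact hs
  | succ m ih =>
    obtain ⟨w, hw, hsteps⟩ := h
    exact ih hsteps (nimMove_le hw hs)

lemma stepsTo_ge {n c : ℕ} {u v : NimV n} {m : ℕ} (h : StepsTo (nim2R n) m u v)
    (hv : ∀ a ∈ v.1, c ≤ a) : ∀ a ∈ u.1, c ≤ a := by
  induction m generalizing u with
  | zero => cases h; exact hv
  | succ m ih =>
    obtain ⟨w, hw, hsteps⟩ := h
    exact nimMove_ge hw (ih hsteps)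


def tab (k x y : ℕ) : WithTop ℤ :=
  if y < k then ((2 : ℤ) : WithTop ℤ)
  else if y = k then (if x = k then ((0 : ℤ) : WithTop ℤ) else ((1 : ℤ) : WithTop ℤ))
  else if x = k then ((-1 : ℤ) : WithTop ℤ)
  else if k < x then ((-2 : ℤ) : WithTop ℤ)
  else ⊤

def mkV (n a b : ℕ) (ha : a ≤ n) (hb : b ≤ n) : NimV n :=
  ⟨{a, b}, by simp [Multiset.insert_eq_cons], fun x hx => by
    rcases mem_pair_iff.mp hx with rfl | rfl <;> assumption⟩

lemma sdist_table {n k x y : ℕ} (hxy : x ≤ y)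
    (s u : NimV n) (hs : s.1 = {k, k}) (hu : u.1 = {x, y}) :
    sdist (nim2R n) s u = tab k x y := by
  have hkn : k ≤ n := s.2.2 k (by rw [hs]; exact mem_pair_iff.mpr (Or.inl rfl))
  have hxn : x ≤ n := u.2.2 x (by rw [hu]; exact mem_pair_iff.mpr (Or.inl rfl))
  have hyn : y ≤ n := u.2.2 y (by rw [hu]; exact mem_pair_iff.mpr (Or.inr rfl))
  have hall_s_le : ∀ a ∈ s.1, a ≤ k := fun a ha => by
    rw [hs] at ha; rcases mem_pair_iff.mp ha with rfl | rfl <;> exact le_refl a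
  have hall_s_ge : ∀ a ∈ s.1, k ≤ a := fun a ha => by
    rw [hs] at ha; rcases mem_pair_iff.mp ha with rfl | rfl <;> exact le_refl a
  -- no path s → u when k < y
  have hno_su : k < y → ddist (nim2R n) s u = ⊤ := by
    intro h1
    refine ddist_top fun m hm => ?_
    have := stepsTo_le_s5 hm hall_s_le y (by rw [hu]; exact mem_pair_iff.mpr (Or.inr rfl))
    omega
  -- no path u → s when x < k
  have hno_us : x < k → ddist (nim2R n) u s = ⊤ := by
    intro h1
    refine ddist_top fun m hm => ?_
    have := stepsTo_ge hm hall_s_ge x (by rw [hu]; exact mem_pair_iff.mpr (Or.inl rfl))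
    omega
  rcases lt_trichotomy y k with h1 | h1 | h1
  · -- y < k : value 2
    have htab : tab k x y = ((2 : ℤ) : WithTop ℤ) := by
      unfold tab; split_ifs <;> first | rfl | omega
    have hd1 : ddist (nim2R n) s u = 2 := by
      refine ddist_eq_two ⟨mkV n y k hyn hkn, ?_, u, ?_, rfl⟩ ?_ ?_
      · show NimMove s.1 _
        rw [hs]; exact nimMove_left h1
      · show NimMove _ u.1
        rw [hu, pair_comm' x y]; exact nimMove_right (lt_of_le_of_lt hxy h1)
      · rintro ⟨w, hw, rfl⟩
        obtain ⟨c, hcs, hcu⟩ := nimMove_common s.2.1 hw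
        rw [hs] at hcs; rw [hu] at hcu
        rcases mem_pair_iff.mp hcs with rfl | rfl <;>
          rcases mem_pair_iff.mp hcu with h | h <;> omega
      · intro h
        have : k ∈ u.1 := by rw [← h, hs]; exact mem_pair_iff.mpr (Or.inl rfl)
        rw [hu] at this
        rcases mem_pair_iff.mp this with h' | h' <;> omega
    have hd2 := hno_su -- dummy
    rw [htab]
    unfold sdist
    rw [hd1, hno_us (lt_of_le_of_lt hxy h1), if_pos le_top]
    rfl
  · -- y = k
    subst h1
    rcases eq_or_lt_of_le hxy with rfl | h2
    · -- x = y = k : u = s, value 0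
      have htab : tab x x x = ((0 : ℤ) : WithTop ℤ) := by
        unfold tab; split_ifs <;> first | rfl | omega
      have : s = u := Subtype.ext (by rw [hs, hu])
      rw [htab, this]
      unfold sdist
      rw [ddist_self, if_pos le_rfl]
      rfl
    · -- x < y = k : value 1
      have htab : tab y x y = ((1 : ℤ) : WithTop ℤ) := by
        unfold tab; split_ifs <;> first | rfl | omega
      have hd1 : ddist (nim2R n) s u = 1 := by
        refine ddist_eq_one_s5 ⟨u, ?_, rfl⟩ ?_
        · show NimMove s.1 u.1
          rw [hs, hu]; exact nimMove_left h2
        · intro h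
          have : x ∈ s.1 := by rw [h, hu]; exact mem_pair_iff.mpr (Or.inl rfl)
          rw [hs] at this
          rcases mem_pair_iff.mp this with h' | h' <;> omega
      rw [htab]
      unfold sdist
      rw [hd1, hno_us h2, if_pos le_top]
      rfl
  · -- y > k
    rcases lt_trichotomy x k with h2 | h2 | h2
    · -- x < k < y : ⊤
      have htab : tab k x y = ⊤ := by
        unfold tab; split_ifs <;> first | rfl | omega
      rw [htab]
      unfold sdist
      rw [hno_su h1, hno_us h2, if_pos le_rfl]
      rfl
    · -- x = k < y : value -1
      subst h2
      have htab : tab x x y = ((-1 : ℤ) : WithTop ℤ) := by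
        unfold tab; split_ifs <;> first | rfl | omega
      have hd2 : ddist (nim2R n) u s = 1 := by
        refine ddist_eq_one_s5 ⟨s, ?_, rfl⟩ ?_
        · show NimMove u.1 s.1
          rw [hs, hu]; exact nimMove_right h1
        · intro h
          have : y ∈ s.1 := by rw [← h, hu]; exact mem_pair_iff.mpr (Or.inr rfl)
          rw [hs] at this
          rcases mem_pair_iff.mp this with h' | h' <;> omega
      rw [htab]
      unfold sdist
      rw [hd2, hno_su h1, if_neg (by decide)]
      rfl
    · -- x > k : value -2
      have htab : tab k x y = ((-2 : ℤ) : WithTop ℤ) := by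
        unfold tab; split_ifs <;> first | rfl | omega
      have hkx : k < y := lt_of_lt_of_le h2 hxy
      have hd2 : ddist (nim2R n) u s = 2 := by
        refine ddist_eq_two ⟨mkV n x k hxn hkn, ?_, s, ?_, rfl⟩ ?_ ?_
        · show NimMove u.1 _
          rw [hu]; exact nimMove_right hkx
        · show NimMove _ s.1
          rw [hs]; exact nimMove_left h2
        · rintro ⟨w, hw, rfl⟩
          obtain ⟨c, hcu, hcs⟩ := nimMove_common u.2.1 hw
          rw [hs] at hcs; rw [hu] at hcu
          rcases mem_pair_iff.mp hcs with rfl | rfl <;>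
            rcases mem_pair_iff.mp hcu with h | h <;> omega
        · intro h
          have : k ∈ u.1 := by rw [h, hs]; exact mem_pair_iff.mpr (Or.inl rfl)
          rw [hu] at this
          rcases mem_pair_iff.mp this with h' | h' <;> omega
      rw [htab]
      unfold sdist
      rw [hd2, hno_su h1, if_neg (by decide)]
      rfl

lemma tab_inj {k x y x' y' : ℕ} (hxy : x ≤ y) (hxy' : x' ≤ y')
    (h : tab k x y = tab k x' y') :
    (x < k ↔ x' < k) ∧ (x = k ↔ x' = k) ∧ (y < k ↔ y' < k) ∧ (y = k ↔ y' = k) := by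
  unfold tab at h
  split_ifs at h <;> first | omega | (exact absurd h (by decide))

lemma coord_aux {n x x' : ℕ} (hx'n : x' ≤ n) (hlt : x < x')
    (h : ∀ k, Odd k → 1 ≤ k → k ≤ n → ((x < k ↔ x' < k) ∧ (x = k ↔ x' = k))) : False := by
  rcases Nat.even_or_odd x with he | ho
  · have hx2 : x % 2 = 0 := Nat.even_iff.mp he
    have := h (x + 1) (Nat.odd_iff.mpr (by omega)) (by omega) (by omega)
    omega
  · have hx2 : x % 2 = 1 := Nat.odd_iff.mp ho
    have := h x ho (by omega) (by omega)
    omega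

lemma coord_eq {n x x' : ℕ} (hxn : x ≤ n) (hx'n : x' ≤ n)
    (h : ∀ k, Odd k → 1 ≤ k → k ≤ n → ((x < k ↔ x' < k) ∧ (x = k ↔ x' = k))) : x = x' := by
  rcases lt_trichotomy x x' with hlt | heq | hgt
  · exact absurd (coord_aux hx'n hlt h) id
  · exact heq
  · exact absurd (coord_aux hxn hgt
      (fun k hk h1 h2 => ⟨(h k hk h1 h2).1.symm, (h k hk h1 h2).2.symm⟩)) id

lemma card_odd_range (n : ℕ) :
    ((Finset.range (n + 1)).filter (fun k => Odd k)).card = (n + 1) / 2 := by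
  induction n with
  | zero => rw [Finset.range_one]; rfl
  | succ m ih =>
    rw [Finset.range_add_one, Finset.filter_insert]
    split_ifs with h
    · rw [Finset.card_insert_of_notMem (by simp)]
      have := Nat.odd_iff.mp h
      omega
    · have := Nat.even_iff.mp (Nat.not_odd_iff_even.mp h)
      omega

lemma decomp {n : ℕ} (u : NimV n) : ∃ x y, x ≤ y ∧ y ≤ n ∧ u.1 = {x, y} := by
  obtain ⟨a, b, hab⟩ := Multiset.card_eq_two.mp u.2.1
  rcases le_total a b with h | h
  · exact ⟨a, b, h, u.2.2 b (by rw [hab]; exact mem_pair_iff.mpr (Or.inr rfl)), hab⟩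
  · exact ⟨b, a, h, u.2.2 a (by rw [hab]; exact mem_pair_iff.mpr (Or.inl rfl)),
      by rw [hab, pair_comm']⟩


/-- for every `n ≥ 1`, the set of diagonal positions `{k,k}` with `k` odd,
`1 ≤ k ≤ n`, has cardinality `⌈n/2⌉` and resolves `G(n,n)` w.r.t. signed distance. -/
theorem stmt5 (n : ℕ) (hn : 1 ≤ n) :
    ({u : NimV n | ∃ k : ℕ, Odd k ∧ 1 ≤ k ∧ k ≤ n ∧ u.1 = {k, k}}).ncard = (n + 1) / 2 ∧
    Resolves (nim2R n) {u : NimV n | ∃ k : ℕ, Odd k ∧ 1 ≤ k ∧ k ≤ n ∧ u.1 = {k, k}} := by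
  constructor
  · -- cardinality
    set T : Set ℕ := {k | Odd k ∧ 1 ≤ k ∧ k ≤ n} with hT
    have hF : ∀ k ≤ n, min k n = k := fun k hk => min_eq_left hk
    set F : ℕ → NimV n := fun k =>
      mkV n (min k n) (min k n) (min_le_right k n) (min_le_right k n) with hFdef
    have himg : {u : NimV n | ∃ k : ℕ, Odd k ∧ 1 ≤ k ∧ k ≤ n ∧ u.1 = {k, k}} = F '' T := by
      ext u
      constructor
      · rintro ⟨k, hk1, hk2, hk3, hk4⟩
        refine ⟨k, ⟨hk1, hk2, hk3⟩, ?_⟩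
        refine Subtype.ext ?_
        show ({min k n, min k n} : Multiset ℕ) = u.1
        rw [hF k hk3, hk4]
      · rintro ⟨k, ⟨hk1, hk2, hk3⟩, rfl⟩
        refine ⟨k, hk1, hk2, hk3, ?_⟩
        show ({min k n, min k n} : Multiset ℕ) = {k, k}
        rw [hF k hk3]
    have hinj : Set.InjOn F T := by
      rintro a ⟨_, _, ha3⟩ b ⟨_, _, hb3⟩ hab
      have : ({min a n, min a n} : Multiset ℕ) = {min b n, min b n} :=
        congrArg Subtype.val hab
      rw [hF a ha3, hF b hb3] at this
      have : a ∈ ({b, b} : Multiset ℕ) := by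
        rw [← this]; exact mem_pair_iff.mpr (Or.inl rfl)
      rcases mem_pair_iff.mp this with rfl | rfl <;> rfl
    rw [himg, Set.ncard_image_of_injOn hinj]
    have hTfin : T = ↑((Finset.range (n + 1)).filter (fun k => Odd k)) := by
      ext k
      simp only [hT, Set.mem_setOf_eq, Finset.coe_filter, Finset.mem_range]
      constructor
      · rintro ⟨h1, h2, h3⟩; exact ⟨by omega, h1⟩
      · rintro ⟨h1, h2⟩
        have := Nat.odd_iff.mp h2
        exact ⟨h2, by omega, by omega⟩
    rw [hTfin, Set.ncard_coe_finset, card_odd_range]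
  · -- resolving
    intro u v huv
    obtain ⟨x, y, hxy, hyn, hu⟩ := decomp u
    obtain ⟨x', y', hxy', hy'n, hv⟩ := decomp v
    have key : ∀ k, Odd k → 1 ≤ k → k ≤ n →
        (x < k ↔ x' < k) ∧ (x = k ↔ x' = k) ∧ (y < k ↔ y' < k) ∧ (y = k ↔ y' = k) := by
      intro k hk1 hk2 hk3
      have hsmem : mkV n k k hk3 hk3 ∈
          {u : NimV n | ∃ k : ℕ, Odd k ∧ 1 ≤ k ∧ k ≤ n ∧ u.1 = {k, k}} :=
        ⟨k, hk1, hk2, hk3, rfl⟩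
      have := huv _ hsmem
      rw [sdist_table hxy _ u rfl hu, sdist_table hxy' _ v rfl hv] at this
      exact tab_inj hxy hxy' this
    have hx : x = x' := coord_eq (le_trans hxy hyn) (le_trans hxy' hy'n)
      (fun k h1 h2 h3 => ⟨(key k h1 h2 h3).1, (key k h1 h2 h3).2.1⟩)
    have hy : y = y' := coord_eq hyn hy'n
      (fun k h1 h2 h3 => ⟨(key k h1 h2 h3).2.2.1, (key k h1 h2 h3).2.2.2⟩)
    refine Subtype.ext ?_
    rw [hu, hv, hx, hy]
end
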